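/- For every positive integer v, the number of ordered pairs (x, y) ∈ Z_v × Z_v such that x and y together generate the additive group Z_v equals φ(v)·Φ(v), where φ is Euler's totient function and Φ(v) = v·∏_{p | v, p prime} (1 + 1/p) (with Φ(1) = 1). -/

import Mathlib

open Finset

/-- In `ZMod v` (with `v ≠ 0`), the pair `{x, y}` additively generates iff `x, y`
are coprime as ring elements. -/
lemma closure_pair_eq_top_iff {v : ℕ} [NeZero v] (x y : ZMod v) :
    AddSubgroup.closure ({x, y} : Set (ZMod v)) = ⊤ ↔ IsCoprime x y := by
  constructor
  · intro h
    have h1 : (1 : ZMod v) ∈ AddSubgroup.closure ({x, y} : Set (ZMod v)) := by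
      rw [h]; trivial
    rw [AddSubgroup.mem_closure_pair] at h1
    obtain ⟨m, n, hmn⟩ := h1
    exact ⟨(m : ZMod v), (n : ZMod v), by rw [← hmn, zsmul_eq_mul, zsmul_eq_mul]⟩
  · rintro ⟨a, b, hab⟩
    rw [eq_top_iff]
    intro z _
    have h1 : (1 : ZMod v) ∈ AddSubgroup.closure ({x, y} : Set (ZMod v)) := by
      rw [AddSubgroup.mem_closure_pair]
      refine ⟨(a.val : ℤ), (b.val : ℤ), ?_⟩
      rw [zsmul_eq_mul, zsmul_eq_mul]
      push_cast
      rw [ZMod.natCast_zmod_val, ZMod.natCast_zmod_val, hab]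
    have h2 := AddSubgroup.zsmul_mem _ h1 (z.val : ℤ)
    have h3 : (z.val : ℤ) • (1 : ZMod v) = z := by
      rw [zsmul_eq_mul, mul_one]
      push_cast
      exact ZMod.natCast_zmod_val z
    rwa [h3] at h2

/-- Coprimality in a product of commutative rings is componentwise. -/
lemma isCoprime_prod_iff {A B : Type*} [CommRing A] [CommRing B]
    (x y : A × B) : IsCoprime x y ↔ IsCoprime x.1 y.1 ∧ IsCoprime x.2 y.2 := by
  constructor
  · rintro ⟨a, b, hab⟩
    rw [Prod.ext_iff] at hab
    exact ⟨⟨a.1, b.1, hab.1⟩, ⟨a.2, b.2, hab.2⟩⟩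
  · rintro ⟨⟨a1, b1, h1⟩, ⟨a2, b2, h2⟩⟩
    exact ⟨(a1, a2), (b1, b2), Prod.ext h1 h2⟩

/-- Coprimality transfers across a ring equivalence. -/
lemma isCoprime_ringEquiv {A B : Type*} [CommRing A] [CommRing B] (e : A ≃+* B)
    (x y : A) : IsCoprime (e x) (e y) ↔ IsCoprime x y := by
  constructor
  · intro h
    have := h.map (e.symm : B →+* A)
    simpa using this
  · intro h
    exact h.map (e : A →+* B)

/-- In `ZMod (p ^ n)` with `p` prime and `n > 0`, two elements are coprime
iff not both are divisible by `p`. -/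
lemma isCoprime_zmod_pow_iff {p n : ℕ} (hp : p.Prime) (hn : 0 < n)
    (x y : ZMod (p ^ n)) :
    IsCoprime x y ↔ ¬(p ∣ x.val ∧ p ∣ y.val) := by
  haveI : Fact p.Prime := ⟨hp⟩
  haveI : NeZero (p ^ n) := ⟨pow_ne_zero _ hp.pos.ne'⟩
  constructor
  · rintro ⟨a, b, hab⟩ ⟨hx, hy⟩
    have hd : p ∣ p ^ n := dvd_pow_self p hn.ne'
    let f : ZMod (p ^ n) →+* ZMod p := ZMod.castHom hd (ZMod p)
    have hfx : f x = 0 := by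
      show (ZMod.cast x : ZMod p) = 0
      rw [← ZMod.natCast_val, ZMod.natCast_eq_zero_iff]
      exact hx
    have hfy : f y = 0 := by
      show (ZMod.cast y : ZMod p) = 0
      rw [← ZMod.natCast_val, ZMod.natCast_eq_zero_iff]
      exact hy
    have := congrArg f hab
    rw [map_add, map_mul, map_mul, map_one, hfx, hfy, mul_zero, mul_zero,
      add_zero] at this
    exact one_ne_zero this.symm
  · intro h
    rw [not_and_or] at h
    have key : ∀ z w : ZMod (p ^ n), ¬ p ∣ z.val → IsCoprime z w := by
      intro z w hz
      have hc : Nat.Coprime z.val (p ^ n) :=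
        Nat.Coprime.pow_right _ (Nat.coprime_comm.mp
          ((Nat.Prime.coprime_iff_not_dvd hp).2 hz))
      have hu : IsUnit z := by
        have := (ZMod.isUnit_iff_coprime z.val (p ^ n)).2 hc
        rwa [ZMod.natCast_zmod_val] at this
      obtain ⟨u, rfl⟩ := hu
      exact ⟨((u⁻¹ : Units (ZMod (p ^ n))) : ZMod (p ^ n)), 0, by simp⟩
    rcases h with h | h
    · exact key x y h
    · exact (key y x h).symm

/-- The number of elements of `range (p * m)` divisible by `p`. -/
lemma card_range_filter_dvd (p m : ℕ) (hp : 0 < p) :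
    #{k ∈ Finset.range (p * m) | p ∣ k} = m := by
  have h : {k ∈ Finset.range (p * m) | p ∣ k} = (Finset.range m).image (p * ·) := by
    ext k
    simp only [Finset.mem_filter, Finset.mem_range, Finset.mem_image]
    constructor
    · rintro ⟨hk, c, rfl⟩
      exact ⟨c, lt_of_mul_lt_mul_left hk (Nat.zero_le p), rfl⟩
    · rintro ⟨c, hc, rfl⟩
      exact ⟨(Nat.mul_lt_mul_left hp).2 hc, c, rfl⟩
  rw [h, Finset.card_image_of_injective _ (mul_right_injective₀ hp.ne'),
    Finset.card_range]

/-- The number of elements of `ZMod (p ^ n)` with value divisible by `p`. -/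
lemma card_zmod_dvd (p n : ℕ) (hp : p.Prime) (hn : 0 < n) :
    Nat.card {x : ZMod (p ^ n) // p ∣ x.val} = p ^ (n - 1) := by
  classical
  haveI : NeZero (p ^ n) := ⟨pow_ne_zero _ hp.pos.ne'⟩
  rw [Nat.card_eq_fintype_card, Fintype.card_subtype]
  have hpn : p ^ n = p * p ^ (n - 1) := by
    conv_lhs => rw [show n = (n - 1) + 1 by omega]
    rw [pow_succ, mul_comm]
  rw [← card_range_filter_dvd p (p ^ (n - 1)) hp.pos, ← hpn]
  refine Finset.card_bij (fun x _ => x.val) ?_ ?_ ?_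
  · intro x hx
    simp only [Finset.mem_filter, Finset.mem_univ, true_and] at hx ⊢
    exact ⟨Finset.mem_range.2 (ZMod.val_lt x), hx⟩
  · intro x _ y _ h
    exact ZMod.val_injective _ h
  · intro k hk
    simp only [Finset.mem_filter, Finset.mem_range] at hk
    refine ⟨(k : ZMod (p ^ n)), ?_, ?_⟩
    · simp only [Finset.mem_filter, Finset.mem_univ, true_and]
      rw [ZMod.val_cast_of_lt hk.1]
      exact hk.2
    · exact ZMod.val_cast_of_lt hk.1

theorem card_generating_pairs
    (v : ℕ) (hv : 0 < v) :
    (Nat.card {p : ZMod v × ZMod v //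
        AddSubgroup.closure ({p.1, p.2} : Set (ZMod v)) = ⊤} : ℚ) =
      (Nat.totient v : ℚ) * ((v : ℚ) * ∏ p ∈ v.primeFactors, (1 + 1 / (p : ℚ))) := by
  haveI : NeZero v := ⟨hv.ne'⟩
  -- replace the closure condition by `IsCoprime`
  have hcongr : ∀ (w : ℕ) (_ : NeZero w),
      Nat.card {p : ZMod w × ZMod w //
        AddSubgroup.closure ({p.1, p.2} : Set (ZMod w)) = ⊤}
      = Nat.card {p : ZMod w × ZMod w // IsCoprime p.1 p.2} := by
    intro w hw
    exact Nat.card_congr (Equiv.subtypeEquivRight fun p =>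
      closure_pair_eq_top_iff p.1 p.2)
  rw [hcongr v ‹_›]
  -- now prove the statement for the coprime-pair count, by induction
  clear hcongr
  induction v using Nat.recOnPosPrimePosCoprime with
  | prime_pow p n hp hn =>
    haveI : Fact p.Prime := ⟨hp⟩
    have hp' : p.Prime := hp
    haveI : NeZero (p ^ n) := ⟨pow_ne_zero _ hp'.pos.ne'⟩
    -- count: p^(2n) - p^(2n-2)
    have hcount : Nat.card {q : ZMod (p ^ n) × ZMod (p ^ n) // IsCoprime q.1 q.2}
        = p ^ (2 * n) - (p ^ (n - 1)) ^ 2 := by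
      classical
      rw [Nat.card_eq_fintype_card]
      have h1 : Fintype.card {q : ZMod (p ^ n) × ZMod (p ^ n) // IsCoprime q.1 q.2}
          = Fintype.card {q : ZMod (p ^ n) × ZMod (p ^ n) //
              ¬(p ∣ q.1.val ∧ p ∣ q.2.val)} :=
        Fintype.card_congr (Equiv.subtypeEquivRight fun q =>
          isCoprime_zmod_pow_iff hp' hn q.1 q.2)
      rw [h1, Fintype.card_subtype_compl]
      have h2 : Fintype.card {q : ZMod (p ^ n) × ZMod (p ^ n) //
            p ∣ q.1.val ∧ p ∣ q.2.val}
          = (p ^ (n - 1)) ^ 2 := by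
        rw [Fintype.card_congr (Equiv.subtypeProdEquivProd
            (p := fun x : ZMod (p ^ n) => p ∣ x.val)
            (q := fun x : ZMod (p ^ n) => p ∣ x.val)),
          Fintype.card_prod, ← Nat.card_eq_fintype_card,
          card_zmod_dvd p n hp' hn, sq]
      rw [h2, Fintype.card_prod, ZMod.card, ← pow_add, two_mul]
    rw [hcount]
    -- RHS computation
    rw [Nat.primeFactors_prime_pow hn.ne' hp', Finset.prod_singleton,
      Nat.totient_prime_pow hp' hn]
    have hle : (p ^ (n - 1)) ^ 2 ≤ p ^ (2 * n) := by
      rw [← pow_mul]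
      exact Nat.pow_le_pow_right hp'.pos (by omega)
    rw [Nat.cast_sub hle]
    have hpQ : (p : ℚ) ≠ 0 := Nat.cast_ne_zero.2 hp'.pos.ne'
    push_cast [Nat.cast_sub hp'.one_lt.le]
    have h2n : (p : ℚ) ^ (2 * n) = (p : ℚ) ^ (n - 1) * ((p : ℚ) ^ (n - 1) * (p : ℚ) ^ 2) := by
      rw [← pow_add, ← pow_add]; congr 1; omega
    have hn' : (p : ℚ) ^ n = (p : ℚ) ^ (n - 1) * (p : ℚ) := by
      rw [← pow_succ]; congr 1; omega
    rw [h2n, hn', sq]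
    field_simp
    ring
  | zero => exact absurd hv (lt_irrefl 0)
  | one =>
    haveI : Unique {q : ZMod 1 × ZMod 1 // IsCoprime q.1 q.2} :=
      { default := ⟨(0, 0), ⟨1, 1, Subsingleton.elim _ _⟩⟩
        uniq := fun a => Subtype.ext (Subsingleton.elim _ _) }
    rw [Nat.card_unique]
    simp
  | coprime a b ha hb hab iha ihb =>
    haveI : NeZero a := ⟨by omega⟩
    haveI : NeZero b := ⟨by omega⟩
    have hab' : Nat.Coprime a b := hab
    -- multiplicativity of the count
    have hmult : Nat.card {q : ZMod (a * b) × ZMod (a * b) // IsCoprime q.1 q.2}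
        = Nat.card {q : ZMod a × ZMod a // IsCoprime q.1 q.2} *
          Nat.card {q : ZMod b × ZMod b // IsCoprime q.1 q.2} := by
      rw [← Nat.card_prod]
      apply Nat.card_congr
      let e : ZMod (a * b) ≃+* ZMod a × ZMod b := ZMod.chineseRemainder hab'
      have e1 : {q : ZMod (a * b) × ZMod (a * b) // IsCoprime q.1 q.2} ≃
          {q : (ZMod a × ZMod b) × (ZMod a × ZMod b) // IsCoprime q.1 q.2} :=
        Equiv.subtypeEquiv (Equiv.prodCongr e.toEquiv e.toEquiv)
          (fun q => (isCoprime_ringEquiv e q.1 q.2).symm)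
      have e2 : {q : (ZMod a × ZMod b) × (ZMod a × ZMod b) // IsCoprime q.1 q.2} ≃
          {q : (ZMod a × ZMod b) × (ZMod a × ZMod b) //
            IsCoprime q.1.1 q.2.1 ∧ IsCoprime q.1.2 q.2.2} :=
        Equiv.subtypeEquivRight fun q => isCoprime_prod_iff q.1 q.2
      have e3 : {q : (ZMod a × ZMod b) × (ZMod a × ZMod b) //
            IsCoprime q.1.1 q.2.1 ∧ IsCoprime q.1.2 q.2.2} ≃
          {q : (ZMod a × ZMod a) × (ZMod b × ZMod b) //
            IsCoprime q.1.1 q.1.2 ∧ IsCoprime q.2.1 q.2.2} :=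
        Equiv.subtypeEquiv
          (Equiv.prodProdProdComm (ZMod a) (ZMod b) (ZMod a) (ZMod b))
          (fun q => Iff.rfl)
      exact ((e1.trans e2).trans e3).trans
        (Equiv.subtypeProdEquivProd
          (p := fun r : ZMod a × ZMod a => IsCoprime r.1 r.2)
          (q := fun r : ZMod b × ZMod b => IsCoprime r.1 r.2))
    rw [hmult, Nat.totient_mul hab', hab'.primeFactors_mul,
      Finset.prod_union hab'.disjoint_primeFactors]
    push_cast
    rw [iha (by omega) ⟨by omega⟩, ihb (by omega) ⟨by omega⟩]
    ring
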